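/- For a monoid M acting by injections on a set X, if χ : X → [k] is a universal colouring and ψ : X → [l] is a persistent colouring, then l ≤ k. -/
import Mathlib

def PersistentD (M X : Type) [Monoid M] [MulAction M X] {l : ℕ} (ψ : X → Fin l) : Prop :=
  ∀ p : M, Set.range (fun x : X => ψ (p • x)) = Set.univ

def UniversalD (M X : Type) [Monoid M] [MulAction M X] {k : ℕ} (χ : X → Fin k) : Prop :=
  ∀ (l : ℕ) (ψ : X → Fin l) (p : M), ∃ (q : M) (f : Fin k → Fin l),
    ∀ x : X, ψ ((p * q) • x) = f (χ ((p * q) • x))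

theorem persistent_le_universal (M X : Type) [Monoid M] [MulAction M X]
    (hinj : ∀ p : M, Function.Injective (fun x : X => p • x))
    (k l : ℕ) (χ : X → Fin k) (ψ : X → Fin l)
    (huniv : UniversalD M X χ) (hpers : PersistentD M X ψ) :
    l ≤ k := by
  obtain ⟨q, f, hf⟩ := huniv l ψ 1
  simp only [one_mul] at hf
  have hsurj : Function.Surjective f := by
    intro y
    have := hpers q
    have hy : y ∈ Set.range (fun x : X => ψ (q • x)) := this ▸ Set.mem_univ y
    obtain ⟨x, hx⟩ := hy
    exact ⟨χ (q • x), by simp only [← hf x]; exact hx⟩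
  simpa using Fintype.card_le_of_surjective f hsurj
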